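/- arXiv:1701.01165 — 2 statements merged into one kernel-verified Lean document; each statement's English description precedes it below -/
import Mathlib

section
/- Given a measurable L-Lipschitz concave function λ: H → ℝ and ε_n = 1/n, for each n there exists a measurable selection p^n: H → H with ‖p^n(z)‖ ≤ L such that -⟨z, p^n(z)⟩ - λ_*(p^n(z)) - 1/n ≤ λ(z) for all z, where λ_* is the concave conjugate. -/
open TopologicalSpace

lemma supergrad {H : Type*} [NormedAddCommGroup H] [InnerProductSpace ℝ H]
    [CompleteSpace H]
    (L : ℝ) (hL : 0 ≤ L) (lam : H → ℝ) (hconc : ConcaveOn ℝ Set.univ lam)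
    (hcont : Continuous lam) (hLip : ∀ z z', |lam z - lam z'| ≤ L * ‖z - z'‖)
    (z₀ : H) : ∃ q : H, ‖q‖ ≤ L ∧ ∀ w, lam w ≤ lam z₀ + inner ℝ (w - z₀) q := by
  classical
  set S : Set (H × ℝ) := {p : H × ℝ | p.1 ∈ Set.univ ∧ p.2 < lam p.1} with hS
  have hconv : Convex ℝ S := hconc.convex_strict_hypograph
  have hopen : IsOpen S := by
    have : S = {p : H × ℝ | p.2 < lam p.1} := by ext p; simp [hS]
    rw [this]
    exact isOpen_lt continuous_snd (hcont.comp continuous_fst)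
  have hnot : (z₀, lam z₀) ∉ S := by simp [hS]
  obtain ⟨f, hf⟩ := geometric_hahn_banach_open_point hconv hopen hnot
  set g : H →L[ℝ] ℝ := f.comp (ContinuousLinearMap.inl ℝ H ℝ) with hg
  set c : ℝ := f (0, 1) with hc
  have hsplit : ∀ (w : H) (t : ℝ), f (w, t) = g w + t * c := by
    intro w t
    have h0 : (w, t) = (w, (0:ℝ)) + t • ((0:H), (1:ℝ)) := by
      simp [Prod.ext_iff]
    rw [h0, map_add, map_smul]
    simp [hg, hc, smul_eq_mul]
  have key : ∀ (w : H) (t : ℝ), t < lam w → g w + t * c < g z₀ + lam z₀ * c := by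
    intro w t ht
    have := hf (w, t) ⟨Set.mem_univ _, ht⟩
    rwa [hsplit, hsplit] at this
  have hcpos : 0 < c := by
    have := key z₀ (lam z₀ - 1) (by linarith)
    nlinarith
  have key2 : ∀ w : H, g w + lam w * c ≤ g z₀ + lam z₀ * c := by
    intro w
    refine le_of_forall_pos_le_add fun ε hε => ?_
    have hdc : 0 < ε / c := div_pos hε hcpos
    have := key w (lam w - ε / c) (by linarith)
    have hεc : (ε / c) * c = ε := div_mul_cancel₀ ε (ne_of_gt hcpos)
    nlinarith
  set v : H := (InnerProductSpace.toDual ℝ H).symm g with hv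
  have hvw : ∀ w : H, (inner ℝ w v : ℝ) = g w := by
    intro w
    rw [real_inner_comm, hv, InnerProductSpace.toDual_symm_apply]
  set q : H := -(c⁻¹ • v) with hq
  have hsg : ∀ w, lam w ≤ lam z₀ + inner ℝ (w - z₀) q := by
    intro w
    have h2 := key2 w
    have hiq : (inner ℝ (w - z₀) q : ℝ) = (g z₀ - g w) / c := by
      rw [hq, inner_neg_right, inner_smul_right, inner_sub_left, hvw, hvw]
      field_simp
      ring
    rw [hiq, ← sub_le_iff_le_add', le_div_iff₀ hcpos]
    nlinarith
  have hqL : ‖q‖ ≤ L := by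
    rcases eq_or_lt_of_le (norm_nonneg q) with h0 | h0
    · rw [← h0]; exact hL
    · have h1 := hsg (z₀ - q)
      have h2 : (inner ℝ (z₀ - q - z₀) q : ℝ) = -‖q‖^2 := by
        have : z₀ - q - z₀ = -q := by abel
        rw [this, inner_neg_left, real_inner_self_eq_norm_sq]
      rw [h2] at h1
      have h3 : |lam z₀ - lam (z₀ - q)| ≤ L * ‖q‖ := by
        have := hLip z₀ (z₀ - q)
        simpa using this
      have h4 : lam z₀ - lam (z₀ - q) ≤ L * ‖q‖ := le_trans (le_abs_self _) h3
      nlinarith [abs_nonneg (lam z₀ - lam (z₀ - q)), neg_abs_le (lam z₀ - lam (z₀ - q))]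
  exact ⟨q, hqL, hsg⟩

/-- Measurable `1/n`-optimal selection for the concave-conjugate representation of an
`L`-Lipschitz concave function on a separable Hilbert space: there is a measurable
`p : H → H` with `‖p(z)‖ ≤ L` such that `-⟨z,p(z)⟩ - λ(z) - 1/n ≤ λ_*(p(z))`
(equivalently `-⟨z,p(z)⟩ - λ_*(p(z)) - 1/n ≤ λ(z)`). -/
theorem stmt16 {H : Type*} [NormedAddCommGroup H] [InnerProductSpace ℝ H]
    [CompleteSpace H] [TopologicalSpace.SeparableSpace H]
    [MeasurableSpace H] [BorelSpace H]
    (L : ℝ) (hL : 0 ≤ L) (lam : H → ℝ) (hconc : ConcaveOn ℝ Set.univ lam)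
    (hcont : Continuous lam) (hLip : ∀ z z', |lam z - lam z'| ≤ L * ‖z - z'‖)
    (lamStar : H → EReal)
    (hstar : ∀ p : H, lamStar p = ⨅ z : H, ((-(inner ℝ z p : ℝ) - lam z : ℝ) : EReal)) :
    ∀ n : ℕ, 0 < n → ∃ p : H → H, Measurable p ∧ (∀ z, ‖p z‖ ≤ L) ∧
      ∀ z, ((-(inner ℝ z (p z) : ℝ) - lam z - 1/(n:ℝ) : ℝ) : EReal) ≤ lamStar (p z) := by
  classical
  intro n hn
  have hnpos : (0:ℝ) < n := Nat.cast_pos.mpr hn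
  set δ : ℝ := 1 / (2 * (L + 1) * n) with hδ
  have hδpos : 0 < δ := by positivity
  have : Nonempty H := ⟨0⟩
  set u : ℕ → H := TopologicalSpace.denseSeq H with hu
  have hdense : DenseRange u := TopologicalSpace.denseRange_denseSeq H
  have hex : ∀ z : H, ∃ k, dist z (u k) < δ := fun z => hdense.exists_dist_lt z hδpos
  choose q hqL hqsg using fun k => supergrad L hL lam hconc hcont hLip (u k)
  refine ⟨fun z => -(q (Nat.find (hex z))), ?_, ?_, ?_⟩
  · have hm : Measurable fun z => q (Nat.find (hex z)) := by
      apply Measurable.find (f := fun k (_ : H) => q k) (fun k => measurable_const)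
      intro k
      exact measurableSet_lt (measurable_id.dist measurable_const) measurable_const
    exact hm.neg
  · intro z; rw [norm_neg]; exact hqL _
  · intro z
    rw [hstar]
    refine le_iInf fun w => EReal.coe_le_coe_iff.2 ?_
    set k := Nat.find (hex z) with hk
    have hdz : dist z (u k) < δ := Nat.find_spec (hex z)
    have h1 : lam w ≤ lam (u k) + inner ℝ (w - u k) (q k) := hqsg k w
    have h2 : lam (u k) ≤ lam z + L * δ := by
      have := hLip (u k) z
      have hd : ‖u k - z‖ ≤ δ := by
        rw [← dist_eq_norm, dist_comm]; exact hdz.le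
      have hle : lam (u k) - lam z ≤ L * ‖u k - z‖ := le_trans (le_abs_self _) this
      nlinarith [mul_le_mul_of_nonneg_left hd hL]
    have h3 : (inner ℝ (z - u k) (q k) : ℝ) ≤ L * δ := by
      have hcs := real_inner_le_norm (z - u k) (q k)
      have hd : ‖z - u k‖ ≤ δ := by rw [← dist_eq_norm]; exact hdz.le
      calc (inner ℝ (z - u k) (q k) : ℝ) ≤ ‖z - u k‖ * ‖q k‖ := hcs
        _ ≤ δ * L := mul_le_mul hd (hqL k) (norm_nonneg _) hδpos.le
        _ = L * δ := mul_comm _ _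
    have hsplit : (inner ℝ (w - u k) (q k) : ℝ)
        = inner ℝ (w - z) (q k) + inner ℝ (z - u k) (q k) := by
      rw [← inner_add_left]; congr 1; abel
    have h4 : (2 : ℝ) * L * δ ≤ 1 / n := by
      rw [hδ, mul_one_div, div_le_div_iff₀ (by positivity) hnpos]
      nlinarith
    have hfin : lam w ≤ lam z + inner ℝ (w - z) (q k) + 1 / n := by
      rw [hsplit] at h1; linarith
    have hiz : (inner ℝ z (-(q k)) : ℝ) = -(inner ℝ z (q k)) := inner_neg_right z (q k)
    have hiw : (inner ℝ w (-(q k)) : ℝ) = -(inner ℝ w (q k)) := inner_neg_right w (q k)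
    have hws : (inner ℝ (w - z) (q k) : ℝ) = inner ℝ w (q k) - inner ℝ z (q k) :=
      inner_sub_left w z (q k)
    rw [hiz, hiw] at *
    rw [hws] at hfin
    linarith
end

section
/- Let f, f': [0,∞) → ℝ be absolutely continuous with f(0) = f'(0) and suppose ⟨f(s)-f'(s), d/ds(f(s)-f'(s))⟩ ≤ -μ|f(s)-f'(s)|² + |f(s)-f'(s)|·h(s) for a.e. s, with h ≥ 0 integrable. Then |f(T)-f'(T)| ≤ ∫₀^T e^{-μ(T-s)} h(s) ds. -/
open MeasureTheory intervalIntegral Set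

/-- Deterministic dissipativity comparison at the core of Lemma 3.2's proof. -/
theorem stmt18 (μ : ℝ) (hμ : 0 < μ) (f f' df df' h : ℝ → ℝ)
    (hf : ∀ s, HasDerivAt f (df s) s) (hf' : ∀ s, HasDerivAt f' (df' s) s)
    (h0 : f 0 = f' 0) (hh : ∀ s, 0 ≤ h s)
    (hhint : ∀ T : ℝ, IntervalIntegrable h MeasureTheory.volume 0 T)
    (hdiss : ∀ s ≥ (0:ℝ),
      (f s - f' s) * (df s - df' s) ≤ -μ * (f s - f' s)^2 + |f s - f' s| * h s) :
    ∀ T ≥ (0:ℝ), |f T - f' T| ≤ ∫ s in (0:ℝ)..T, Real.exp (-μ*(T-s)) * h s := by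
  intro T hT
  set u : ℝ → ℝ := fun s => f s - f' s with hu
  have hu' : ∀ s, HasDerivAt u (df s - df' s) s := fun s => (hf s).sub (hf' s)
  -- rewrite RHS as e^{-μT} * ∫ e^{μs} h s
  have hrhs : (∫ s in (0:ℝ)..T, Real.exp (-μ*(T-s)) * h s)
      = Real.exp (-μ*T) * ∫ s in (0:ℝ)..T, Real.exp (μ*s) * h s := by
    rw [← intervalIntegral.integral_const_mul]
    apply intervalIntegral.integral_congr
    intro s _
    show Real.exp (-μ*(T-s)) * h s = Real.exp (-μ*T) * (Real.exp (μ*s) * h s)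
    rw [← mul_assoc, ← Real.exp_add]
    ring_nf
  rw [hrhs]
  -- integrability of e^{μs} h s on [0,T]
  have hexpint : IntervalIntegrable (fun s => Real.exp (μ*s) * h s) volume 0 T :=
    (hhint T).continuousOn_mul (Continuous.continuousOn (by fun_prop))
  -- suffices : for all ε > 0, e^{μT}|u T| ≤ ∫ e^{μs} h + ε e^{μT}
  have key : ∀ ε > (0:ℝ), Real.exp (μ*T) * |u T|
      ≤ (∫ s in (0:ℝ)..T, Real.exp (μ*s) * h s) + ε * Real.exp (μ*T) := by
    intro ε hε
    set v : ℝ → ℝ := fun s => Real.sqrt ((u s)^2 + ε^2) with hv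
    have hvpos : ∀ s, 0 < v s := fun s =>
      Real.sqrt_pos.2 (by positivity)
    have hvge : ∀ s, ε ≤ v s := fun s => by
      rw [hv]
      calc ε = Real.sqrt (ε^2) := by rw [Real.sqrt_sq hε.le]
      _ ≤ _ := Real.sqrt_le_sqrt (by nlinarith)
    have huv : ∀ s, |u s| ≤ v s := fun s => by
      rw [hv]
      calc |u s| = Real.sqrt ((u s)^2) := (Real.sqrt_sq_eq_abs _).symm
      _ ≤ _ := Real.sqrt_le_sqrt (by nlinarith)
    have hv' : ∀ s, HasDerivAt v (u s * (df s - df' s) / v s) s := by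
      intro s
      have h1 : HasDerivAt (fun s => (u s)^2 + ε^2) (2 * u s * (df s - df' s)) s := by
        simpa using (((hu' s).pow 2).add_const (ε^2))
      have h2 := (Real.hasDerivAt_sqrt (x := (u s)^2 + ε^2) (by positivity)).comp s h1
      refine h2.congr_deriv ?_
      rw [hv]
      field_simp
    -- W = e^{μs} v s
    set W : ℝ → ℝ := fun s => Real.exp (μ*s) * v s with hW
    have hW' : ∀ s, HasDerivAt W
        (Real.exp (μ*s) * (μ * v s + u s * (df s - df' s) / v s)) s := by
      intro s
      have he : HasDerivAt (fun s : ℝ => Real.exp (μ*s)) (μ * Real.exp (μ*s)) s := by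
        simpa [mul_comm] using
          ((hasDerivAt_id s).const_mul μ).exp
      have := he.mul (hv' s)
      refine this.congr_deriv ?_
      ring
    set φ : ℝ → ℝ := fun s => Real.exp (μ*s) * h s + ε * (μ * Real.exp (μ*s)) with hφ
    have hφint : IntegrableOn φ (Icc 0 T) volume := by
      have h1 : IntervalIntegrable φ volume 0 T := by
        apply IntervalIntegrable.add hexpint
        apply Continuous.intervalIntegrable
        fun_prop
      rwa [intervalIntegrable_iff_integrableOn_Icc_of_le hT] at h1
    have hbound : ∀ s ∈ Ioo (0:ℝ) T,
        Real.exp (μ*s) * (μ * v s + u s * (df s - df' s) / v s) ≤ φ s := by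
      intro s hs
      have hd := hdiss s hs.1.le
      have hvs := hvpos s
      have h1 : u s * (df s - df' s) / v s ≤ (-μ * (u s)^2 + |u s| * h s) / v s :=
        div_le_div_of_nonneg_right hd hvs.le |>.trans_eq rfl
      have h2 : |u s| * h s / v s ≤ h s := by
        rw [div_le_iff₀ hvs]
        have := huv s
        nlinarith [hh s, hvs.le]
      have h3 : -μ * (u s)^2 / v s ≤ -μ * v s + μ * ε := by
        have hv2 : (v s)^2 = (u s)^2 + ε^2 := Real.sq_sqrt (by positivity)
        rw [div_le_iff₀ hvs]
        have hvge' := hvge s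
        nlinarith [mul_le_mul_of_nonneg_left hvge' (mul_pos hμ hε).le]
      have h4 : μ * v s + u s * (df s - df' s) / v s ≤ h s + μ * ε := by
        have : (-μ * (u s)^2 + |u s| * h s) / v s
            = -μ * (u s)^2 / v s + |u s| * h s / v s := by ring
        nlinarith [h1.trans_eq this]
      rw [hφ]
      have hexp : (0:ℝ) < Real.exp (μ*s) := Real.exp_pos _
      calc Real.exp (μ*s) * (μ * v s + u s * (df s - df' s) / v s)
          ≤ Real.exp (μ*s) * (h s + μ * ε) := by
            exact mul_le_mul_of_nonneg_left h4 hexp.le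
        _ = Real.exp (μ*s) * h s + ε * (μ * Real.exp (μ*s)) := by ring
    have hftc : W T - W 0 ≤ ∫ s in (0:ℝ)..T, φ s := by
      apply sub_le_integral_of_hasDeriv_right_of_le hT
      · exact fun s _ => ((hW' s).continuousAt).continuousWithinAt
      · exact fun s hs => ((hW' s).hasDerivWithinAt)
      · exact hφint
      · exact hbound
    -- compute ∫ φ
    have hint2 : (∫ s in (0:ℝ)..T, ε * (μ * Real.exp (μ*s)))
        = ε * (Real.exp (μ*T) - 1) := by
      rw [intervalIntegral.integral_const_mul]
      congr 1
      have : ∀ s ∈ uIcc (0:ℝ) T, HasDerivAt (fun s => Real.exp (μ*s))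
          (μ * Real.exp (μ*s)) s := by
        intro s _
        simpa [mul_comm] using
          ((hasDerivAt_id s).const_mul μ).exp
      rw [intervalIntegral.integral_eq_sub_of_hasDerivAt this
        (Continuous.intervalIntegrable (by fun_prop) _ _)]
      simp
    have hφeq : (∫ s in (0:ℝ)..T, φ s)
        = (∫ s in (0:ℝ)..T, Real.exp (μ*s) * h s) + ε * (Real.exp (μ*T) - 1) := by
      rw [hφ, intervalIntegral.integral_add hexpint
        (Continuous.intervalIntegrable (by fun_prop) _ _), hint2]
    have hW0 : W 0 = ε := by
      have : u 0 = 0 := by simp [hu, h0]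
      simp [hW, hv, this, Real.sqrt_sq hε.le]
    have hWT : Real.exp (μ*T) * |u T| ≤ W T :=
      mul_le_mul_of_nonneg_left (huv T) (Real.exp_pos _).le
    calc Real.exp (μ*T) * |u T| ≤ W T := hWT
      _ ≤ W 0 + ∫ s in (0:ℝ)..T, φ s := by linarith [hftc]
      _ = (∫ s in (0:ℝ)..T, Real.exp (μ*s) * h s) + ε * Real.exp (μ*T) := by
          rw [hW0, hφeq]; ring
  -- conclude by letting ε → 0
  have hfinal : Real.exp (μ*T) * |u T| ≤ ∫ s in (0:ℝ)..T, Real.exp (μ*s) * h s := by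
    apply le_of_forall_pos_le_add
    intro δ hδ
    have := key (δ / Real.exp (μ*T)) (by positivity)
    calc Real.exp (μ*T) * |u T|
        ≤ (∫ s in (0:ℝ)..T, Real.exp (μ*s) * h s)
          + (δ / Real.exp (μ*T)) * Real.exp (μ*T) := this
      _ = (∫ s in (0:ℝ)..T, Real.exp (μ*s) * h s) + δ := by
          rw [div_mul_cancel₀]; exact (Real.exp_pos _).ne'
  have hexpT : (0:ℝ) < Real.exp (μ*T) := Real.exp_pos _
  rw [← mul_le_mul_iff_right₀ hexpT]
  calc Real.exp (μ*T) * |u T| ≤ ∫ s in (0:ℝ)..T, Real.exp (μ*s) * h s := hfinal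
    _ = Real.exp (μ*T) * (Real.exp (-μ*T) * ∫ s in (0:ℝ)..T, Real.exp (μ*s) * h s) := by
        rw [← mul_assoc, ← Real.exp_add]; ring_nf; simp
end
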